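/- Let 𝔤 = 𝔤_{3.3} ⊕ 𝔤₁ be the 4-dimensional real Lie algebra with basis e₁,...,e₄ and nonzero brackets [e₂,e₃] = −e₂ and [e₃,e₁] = e₁. A 4×4 real matrix R equals η·Id + D for some η ∈ ℝ and some derivation D of 𝔤 if and only if R₃₁ = R₄₁ = R₃₂ = R₄₂ = R₁₄ = R₂₄ = R₃₄ = 0. In this case η = R₃₃. -/
import Mathlib


open Matrix

/-- The Lie bracket of the Lie algebra, in coordinates. -/
def br (x y : Fin 4 → ℝ) : Fin 4 → ℝ :=
  ![(x 2 * y 0 - x 0 * y 2), -(x 1 * y 2 - x 2 * y 1), (0:ℝ), (0:ℝ)]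

/-- `D` (acting via `mulVec`) is a derivation of the bracket. -/
def IsDer (D : Matrix (Fin 4) (Fin 4) ℝ) : Prop :=
  ∀ x y : Fin 4 → ℝ, D.mulVec (br x y) = br (D.mulVec x) y + br x (D.mulVec y)

lemma der_iff (D : Matrix (Fin 4) (Fin 4) ℝ) :
    IsDer D ↔ (D 2 0 = 0 ∧ D 3 0 = 0 ∧ D 2 1 = 0 ∧ D 3 1 = 0 ∧ D 0 3 = 0 ∧ D 1 3 = 0 ∧
      D 2 3 = 0 ∧ D 2 2 = 0) := by
  constructor
  · intro h
    have h13_2 := congrFun (h ![1,0,0,0] ![0,0,1,0]) 2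
    have h13_3 := congrFun (h ![1,0,0,0] ![0,0,1,0]) 3
    have h13_0 := congrFun (h ![1,0,0,0] ![0,0,1,0]) 0
    have h23_2 := congrFun (h ![0,1,0,0] ![0,0,1,0]) 2
    have h23_3 := congrFun (h ![0,1,0,0] ![0,0,1,0]) 3
    have h14_0 := congrFun (h ![1,0,0,0] ![0,0,0,1]) 0
    have h34_0 := congrFun (h ![0,0,1,0] ![0,0,0,1]) 0
    have h34_1 := congrFun (h ![0,0,1,0] ![0,0,0,1]) 1
    simp [br, mulVec, dotProduct, Fin.sum_univ_four] at h13_2 h13_3 h13_0 h23_2 h23_3 h14_0 h34_0 h34_1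
    refine ⟨?_, ?_, ?_, ?_, ?_, ?_, ?_, ?_⟩ <;> linarith
  · rintro ⟨h1, h2, h3, h4, h5, h6, h7, h8⟩ x y
    funext i
    fin_cases i <;>
      simp [br, mulVec, dotProduct, Fin.sum_univ_four, h1, h2, h3, h4, h5, h6, h7, h8] <;>
      ring

theorem stmt_4 (R : Matrix (Fin 4) (Fin 4) ℝ) :
    ((∃ (η : ℝ) (D : Matrix (Fin 4) (Fin 4) ℝ), IsDer D ∧
        R = η • (1 : Matrix (Fin 4) (Fin 4) ℝ) + D) ↔
      (R 2 0 = 0 ∧ R 3 0 = 0 ∧ R 2 1 = 0 ∧ R 3 1 = 0 ∧ R 0 3 = 0 ∧ R 1 3 = 0 ∧ R 2 3 = 0)) ∧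
    (∀ (η : ℝ) (D : Matrix (Fin 4) (Fin 4) ℝ), IsDer D →
      R = η • (1 : Matrix (Fin 4) (Fin 4) ℝ) + D → η = R 2 2) := by
  constructor
  · constructor
    · rintro ⟨η, D, hD, rfl⟩
      rw [der_iff] at hD
      obtain ⟨h1, h2, h3, h4, h5, h6, h7, h8⟩ := hD
      simp [Matrix.add_apply, Matrix.smul_apply, Matrix.one_apply, h1, h2, h3, h4, h5, h6, h7]
    · rintro ⟨h1, h2, h3, h4, h5, h6, h7⟩
      refine ⟨R 2 2, R - R 2 2 • (1 : Matrix (Fin 4) (Fin 4) ℝ), ?_, by abel⟩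
      rw [der_iff]
      simp [Matrix.sub_apply, Matrix.smul_apply, Matrix.one_apply, h1, h2, h3, h4, h5, h6, h7]
  · rintro η D hD rfl
    rw [der_iff] at hD
    simp [Matrix.add_apply, Matrix.smul_apply, Matrix.one_apply, hD.2.2.2.2.2.2.2]
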